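/- Let T₁, …, Tₙ be n ≥ 2 distinct equilateral triangles inscribed in the unit circle and let S be the vertex set of the polygon ∩ᵢ Tᵢ. Then each edge of each triangle Tᵢ contains exactly 2 points of S, each point of S lies on the edges of exactly two distinct triangles among T₁, …, Tₙ, and consequently |S| = 3n. -/

import Mathlib

open Metric RealInnerProductSpace

/-- An equilateral triangle inscribed in the unit circle of ℝ², given by its vertices. -/
def InscribedEquilateral (p : Fin 3 → EuclideanSpace ℝ (Fin 2)) : Prop :=
  AffineIndependent ℝ p ∧
  (∀ a, dist (p a) (0 : EuclideanSpace ℝ (Fin 2)) = 1) ∧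
  ∀ a b, a ≠ b → dist (p a) (p b) = dist (p 0) (p 1)

local notation "E2" => EuclideanSpace ℝ (Fin 2)

noncomputable def jay (x : E2) : E2 := (WithLp.equiv 2 (Fin 2 → ℝ)).symm ![-(x 1), x 0]

lemma jay_apply0 (x : E2) : jay x 0 = -(x 1) := rfl
lemma jay_apply1 (x : E2) : jay x 1 = x 0 := rfl

lemma inner_coord (x y : E2) : ⟪x, y⟫ = x 0 * y 0 + x 1 * y 1 := by
  simp [PiLp.inner_apply, Fin.sum_univ_two, RCLike.inner_apply]; ring

lemma normsq_coord (x : E2) : ‖x‖^2 = x 0 ^ 2 + x 1 ^ 2 := by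
  rw [← real_inner_self_eq_norm_sq, inner_coord]; ring

lemma ext_coord {x y : E2} (h0 : x 0 = y 0) (h1 : x 1 = y 1) : x = y := by
  ext i; fin_cases i <;> assumption

lemma inner_jay (w : E2) : ⟪w, jay w⟫ = 0 := by
  rw [inner_coord, jay_apply0, jay_apply1]; ring

lemma norm_jay (w : E2) : ‖jay w‖ = ‖w‖ := by
  have h1 := normsq_coord (jay w); have h2 := normsq_coord w
  rw [jay_apply0, jay_apply1] at h1
  nlinarith [norm_nonneg w, norm_nonneg (jay w)]

/-- decomposition in the basis `{w, jay w}` for a unit vector `w`. -/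
lemma decomp (w x : E2) (hw : ‖w‖ = 1) : x = ⟪w,x⟫ • w + ⟪jay w, x⟫ • jay w := by
  have hn := normsq_coord w; rw [hw] at hn
  refine ext_coord ?_ ?_ <;>
    simp only [PiLp.add_apply, PiLp.smul_apply, smul_eq_mul, inner_coord, jay_apply0, jay_apply1]
  · linear_combination (x 0) * hn
  · linear_combination (x 1) * hn

lemma pyth (w x : E2) (hw : ‖w‖ = 1) : ⟪w,x⟫^2 + ⟪jay w, x⟫^2 = ‖x‖^2 := by
  have hn := normsq_coord w; rw [hw] at hn
  rw [inner_coord, inner_coord, jay_apply0, jay_apply1, normsq_coord]; nlinarith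

lemma dist_sq (x y : E2) : dist x y ^ 2 = ‖x‖^2 - 2*⟪x,y⟫ + ‖y‖^2 := by
  rw [dist_eq_norm, ← real_inner_self_eq_norm_sq, ← real_inner_self_eq_norm_sq,
    ← real_inner_self_eq_norm_sq, inner_sub_sub_self, real_inner_comm y x]; ring

lemma perp_key {x : E2} (y : E2) (hy : ⟪x,y⟫ = 0) : (‖x‖^2) • y = ⟪jay x, y⟫ • jay x := by
  rw [inner_coord] at hy
  refine ext_coord ?_ ?_ <;>
    simp only [PiLp.smul_apply, smul_eq_mul, jay_apply0, jay_apply1, inner_coord, normsq_coord]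
  · linear_combination (x 0) * hy
  · linear_combination (x 1) * hy

/-- two distinct unit vectors supporting at a common point: anything orthogonal to both
is zero. -/
lemma perp_two_eq_zero {u w x r : E2} (hu : ‖u‖ = 1) (hw : ‖w‖ = 1) (hne : u ≠ w)
    (hux : ⟪u,x⟫ = -(1/2)) (hwx : ⟪w,x⟫ = -(1/2))
    (hr1 : ⟪u,r⟫ = 0) (hr2 : ⟪w,r⟫ = 0) : r = 0 := by
  have hnu := normsq_coord u; rw [hu] at hnu
  have hnw := normsq_coord w; rw [hw] at hnw
  have hdet : u 0 * w 1 - u 1 * w 0 ≠ 0 := by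
    intro h
    have hc : ⟪u,w⟫ = 1 ∨ ⟪u,w⟫ = -1 := by
      have h2 : (⟪u,w⟫ - 1) * (⟪u,w⟫ + 1) = 0 := by rw [inner_coord]; nlinarith
      rcases mul_eq_zero.mp h2 with h' | h'
      · left; linarith
      · right; linarith
    rcases hc with h' | h'
    · exact hne ((inner_eq_one_iff_of_norm_eq_one hu hw).mp h')
    · have h1 : ⟪u, -w⟫ = (1:ℝ) := by rw [inner_neg_right, h']; ring
      have huw : u = -w := (inner_eq_one_iff_of_norm_eq_one hu (by rw [norm_neg]; exact hw)).mp h1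
      rw [huw, inner_neg_left, hwx] at hux; norm_num at hux
  rw [inner_coord] at hr1 hr2
  refine ext_coord ?_ ?_ <;> simp only [PiLp.zero_apply]
  · have h2 : (u 0 * w 1 - u 1 * w 0) * r 0 = 0 := by linear_combination w 1 * hr1 - u 1 * hr2
    exact (mul_eq_zero.mp h2).resolve_left hdet
  · have h2 : (u 0 * w 1 - u 1 * w 0) * r 1 = 0 := by linear_combination u 0 * hr2 - w 0 * hr1
    exact (mul_eq_zero.mp h2).resolve_left hdet

/-- at most two unit vectors can have inner product −1/2 with a fixed `x`. -/
lemma atmost_two {x u₁ u₂ u₃ : E2} (h1 : ‖u₁‖ = 1) (h2 : ‖u₂‖ = 1) (h3 : ‖u₃‖ = 1)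
    (h12 : u₁ ≠ u₂) (hx1 : ⟪u₁,x⟫ = -(1/2)) (hx2 : ⟪u₂,x⟫ = -(1/2)) (hx3 : ⟪u₃,x⟫ = -(1/2)) :
    u₃ = u₁ ∨ u₃ = u₂ := by
  have hx0 : x ≠ 0 := by
    intro h; rw [h, inner_zero_right] at hx1; norm_num at hx1
  have hxs : (‖x‖^2 : ℝ) ≠ 0 := pow_ne_zero 2 (norm_ne_zero_iff.mpr hx0)
  have ha : ⟪x, u₂ - u₁⟫ = 0 := by
    rw [inner_sub_right, real_inner_comm u₂ x, real_inner_comm u₁ x, hx1, hx2]; ring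
  have hb : ⟪x, u₃ - u₁⟫ = 0 := by
    rw [inner_sub_right, real_inner_comm u₃ x, real_inner_comm u₁ x, hx1, hx3]; ring
  have hA := perp_key (x := x) _ ha
  have hB := perp_key (x := x) _ hb
  set β := ⟪jay x, u₂ - u₁⟫ with hβdef
  set γ := ⟪jay x, u₃ - u₁⟫ with hγdef
  have hβ : β ≠ 0 := by
    intro h
    rw [h, zero_smul] at hA
    have : u₂ - u₁ = 0 := by
      rcases smul_eq_zero.mp hA with h' | h'
      · exact absurd h' hxs
      · exact h'
    exact h12 (sub_eq_zero.mp this).symm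
  have hne0 : β * ‖x‖^2 ≠ 0 := mul_ne_zero hβ hxs
  have hcomb : (β * ‖x‖^2) • (u₃ - u₁) = (γ * ‖x‖^2) • (u₂ - u₁) := by
    rw [mul_smul, mul_smul, hA, hB, smul_smul, smul_smul, mul_comm]
  set t := γ / β with ht
  have htu : u₃ - u₁ = t • (u₂ - u₁) := by
    calc u₃ - u₁ = (β * ‖x‖^2)⁻¹ • ((β * ‖x‖^2) • (u₃ - u₁)) := (inv_smul_smul₀ hne0 _).symm
      _ = (β * ‖x‖^2)⁻¹ • ((γ * ‖x‖^2) • (u₂ - u₁)) := by rw [hcomb]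
      _ = t • (u₂ - u₁) := by rw [smul_smul]; congr 1; rw [ht]; field_simp
  set c := ⟪u₁, u₂⟫ with hc
  have hcne : c ≠ 1 := fun h => h12 ((inner_eq_one_iff_of_norm_eq_one h1 h2).mp h)
  have hu3 : u₃ = u₁ + t • (u₂ - u₁) := by rw [← htu]; abel
  have hself : ⟪u₃, u₃⟫ = (1:ℝ) := by
    rw [real_inner_self_eq_norm_sq, h3]; norm_num
  have hexp : ⟪u₁ + t • (u₂ - u₁), u₁ + t • (u₂ - u₁)⟫ = 1 + 2*t*(c-1) + t^2*(2-2*c) := by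
    rw [real_inner_add_add_self]
    simp only [real_inner_smul_left, real_inner_smul_right, inner_sub_left, inner_sub_right]
    simp only [real_inner_self_eq_norm_sq, h1, h2, real_inner_comm u₁ u₂, ← hc]
    ring
  rw [hu3, hexp] at hself
  have hfac : t * (t - 1) * (1 - c) = 0 := by linear_combination (1/2) * hself
  rcases mul_eq_zero.mp hfac with h' | h'
  · rcases mul_eq_zero.mp h' with h'' | h''
    · left; rw [hu3, h'', zero_smul, add_zero]
    · right; rw [hu3, (by linarith : t = 1), one_smul]; abel
  · exact absurd (by linarith : c = 1) hcne



lemma jay_norm1 (w : E2) (h : ‖w‖ = 1) : ‖jay w‖ = 1 := by rw [norm_jay, h]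

lemma dist_sq' (x y : E2) : dist x y ^ 2 = ‖x‖^2 - 2*⟪x,y⟫ + ‖y‖^2 := by
  rw [dist_eq_norm, ← real_inner_self_eq_norm_sq, ← real_inner_self_eq_norm_sq,
    ← real_inner_self_eq_norm_sq, inner_sub_sub_self, real_inner_comm y x]; ring

section Tri
variable {p : Fin 3 → E2}

lemma tri_norm (h : InscribedEquilateral p) (a : Fin 3) : ‖p a‖ = 1 := by
  have := h.2.1 a; rwa [dist_zero_right] at this

lemma tri_self (h : InscribedEquilateral p) (a : Fin 3) : ⟪p a, p a⟫ = (1:ℝ) := by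
  rw [real_inner_self_eq_norm_sq, tri_norm h]; norm_num

lemma tri_span (h : InscribedEquilateral p) : affineSpan ℝ (Set.range p) = ⊤ := by
  rw [h.1.affineSpan_eq_top_iff_card_eq_finrank_add_one]
  simp [finrank_euclideanSpace_fin]

lemma tri_inner (h : InscribedEquilateral p) :
    (∀ a b, a ≠ b → ⟪p a, p b⟫ = -(1/2)) ∧ p 0 + p 1 + p 2 = 0 := by
  have hpair : ∀ a b, a ≠ b → ⟪p a, p b⟫ = ⟪p 0, p 1⟫ := by
    intro a b hab
    have hd := h.2.2 a b hab
    have h1 := dist_sq' (p a) (p b)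
    have h2 := dist_sq' (p 0) (p 1)
    rw [hd] at h1
    simp only [tri_norm h] at h1 h2
    linarith
  set t : ℝ := ⟪p 0, p 1⟫ with htd
  have hips : ∀ a, ⟪p a, p 0 + p 1 + p 2⟫ = 1 + 2 * t := by
    have h0 : ⟪p 0, p 0 + p 1 + p 2⟫ = 1 + 2 * t := by
      rw [inner_add_right, inner_add_right, tri_self h, hpair 0 1 (by decide),
        hpair 0 2 (by decide)]; ring
    have h1 : ⟪p 1, p 0 + p 1 + p 2⟫ = 1 + 2 * t := by
      rw [inner_add_right, inner_add_right, tri_self h, hpair 1 0 (by decide),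
        hpair 1 2 (by decide)]; ring
    have h2 : ⟪p 2, p 0 + p 1 + p 2⟫ = 1 + 2 * t := by
      rw [inner_add_right, inner_add_right, tri_self h, hpair 2 0 (by decide),
        hpair 2 1 (by decide)]; ring
    intro a; fin_cases a
    · exact h0
    · exact h1
    · exact h2
  set q : E2 := (3:ℝ)⁻¹ • (p 0 + p 1 + p 2) with hq
  have hdq : ∀ a, dist (p a) q = Real.sqrt (1 - (2/3)*(1+2*t) + ‖q‖^2) := by
    intro a
    have hh : dist (p a) q ^ 2 = 1 - (2/3)*(1+2*t) + ‖q‖^2 := by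
      rw [dist_sq', tri_norm h, hq, real_inner_smul_right, hips a]; ring
    rw [← hh, Real.sqrt_sq dist_nonneg]
  set s : Affine.Simplex ℝ E2 2 := ⟨p, h.1⟩ with hs
  have hcq : q = s.circumcenter := by
    apply Affine.Simplex.eq_circumcenter_of_dist_eq (s := s)
    · show q ∈ affineSpan ℝ (Set.range p); rw [tri_span h]; trivial
    · intro i; exact hdq i
  have hc0 : (0:E2) = s.circumcenter := by
    apply Affine.Simplex.eq_circumcenter_of_dist_eq (s := s)
    · show (0:E2) ∈ affineSpan ℝ (Set.range p); rw [tri_span h]; trivial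
    · intro i; exact h.2.1 i
  have hsum : p 0 + p 1 + p 2 = 0 := by
    have hq0 : q = (0:E2) := by rw [hcq, hc0]
    rw [hq] at hq0
    exact (smul_eq_zero.mp hq0).resolve_left (by norm_num)
  have ht : t = -(1/2) := by
    have := hips 0
    rw [hsum, inner_zero_right] at this
    linarith
  exact ⟨fun a b hab => by rw [hpair a b hab]; exact ht, hsum⟩

/-- barycentric representation with explicit coefficients. -/
lemma tri_bary (h : InscribedEquilateral p) (x : E2) :
    x = ∑ a : Fin 3, ((1 + 2*⟪p a, x⟫)/3) • p a := by
  obtain ⟨hpin, _⟩ := tri_inner h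
  obtain ⟨w, hw1, hw2⟩ := eq_affineCombination_of_mem_affineSpan_of_fintype
    (p1 := x) (p := p) (by rw [tri_span h]; trivial)
  rw [Finset.affineCombination_eq_linear_combination _ _ _ hw1] at hw2
  have hwsum : w 0 + w 1 + w 2 = 1 := by
    have := hw1; rwa [Fin.sum_univ_three] at this
  have hx : ∀ b, ⟪p b, x⟫ = w 0 * ⟪p b, p 0⟫ + w 1 * ⟪p b, p 1⟫ + w 2 * ⟪p b, p 2⟫ := by
    intro b
    have : ⟪p b, x⟫ = ∑ a : Fin 3, w a * ⟪p b, p a⟫ := by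
      rw [hw2, inner_sum]
      exact Finset.sum_congr rfl fun a _ => real_inner_smul_right _ _ _
    rwa [Fin.sum_univ_three] at this
  have hc0 : w 0 = (1 + 2*⟪p 0, x⟫)/3 := by
    have := hx 0
    rw [tri_self h, hpin 0 1 (by decide), hpin 0 2 (by decide)] at this; linarith
  have hc1 : w 1 = (1 + 2*⟪p 1, x⟫)/3 := by
    have := hx 1
    rw [tri_self h, hpin 1 0 (by decide), hpin 1 2 (by decide)] at this; linarith
  have hc2 : w 2 = (1 + 2*⟪p 2, x⟫)/3 := by
    have := hx 2
    rw [tri_self h, hpin 2 0 (by decide), hpin 2 1 (by decide)] at this; linarith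
  have hcoef : ∀ b, w b = (1 + 2*⟪p b, x⟫)/3 := by
    intro b; fin_cases b
    · exact hc0
    · exact hc1
    · exact hc2
  conv_lhs => rw [hw2]
  exact Finset.sum_congr rfl fun a _ => by rw [hcoef a]

lemma tri_hull (h : InscribedEquilateral p) :
    convexHull ℝ (Set.range p) = {x : E2 | ∀ a, -(1/2) ≤ ⟪p a, x⟫} := by
  obtain ⟨hpin, hsum⟩ := tri_inner h
  apply Set.Subset.antisymm
  · apply convexHull_min
    · rintro - ⟨a, rfl⟩ b
      rcases eq_or_ne b a with rfl | hba
      · rw [tri_self h]; norm_num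
      · rw [hpin b a hba]
    · intro x hx y hy s u hs hu hsu
      intro a
      simp only [Set.mem_setOf_eq] at hx hy ⊢
      rw [inner_add_right, real_inner_smul_right, real_inner_smul_right]
      nlinarith [hx a, hy a]
  · intro x hx
    simp only [Set.mem_setOf_eq] at hx
    have hb := tri_bary h x
    have hnn : ∀ a ∈ Finset.univ, 0 ≤ (1 + 2*⟪p a, x⟫)/3 := by
      intro a _; have := hx a; linarith
    have hs1 : ∑ a : Fin 3, (1 + 2*⟪p a, x⟫)/3 = 1 := by
      rw [Fin.sum_univ_three]
      have hz : ⟪p 0 + p 1 + p 2, x⟫ = (0:ℝ) := by rw [hsum, inner_zero_left]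
      rw [inner_add_left, inner_add_left] at hz
      linarith
    have hm := Finset.centerMass_mem_convexHull (t := Finset.univ)
      (w := fun a => (1 + 2*⟪p a, x⟫)/3) (z := p) hnn (by rw [hs1]; norm_num)
      (fun a _ => Set.mem_range_self a)
    rwa [Finset.centerMass_eq_of_sum_1 _ _ hs1, ← hb] at hm

lemma tri_unit_mem (h : InscribedEquilateral p) {q : E2}
    (hq : q ∈ convexHull ℝ (Set.range p)) (hqn : ‖q‖ = 1) : ∃ a, q = p a := by
  obtain ⟨hpin, hsum⟩ := tri_inner h
  by_contra hno
  push_neg at hno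
  have hnn : ∀ a, 0 ≤ (1 + 2*⟪p a, q⟫)/3 := by
    intro a
    rw [tri_hull h] at hq
    have := hq a; linarith
  have hs1 : ∑ a : Fin 3, (1 + 2*⟪p a, q⟫)/3 = 1 := by
    rw [Fin.sum_univ_three]
    have hz : ⟪p 0 + p 1 + p 2, q⟫ = (0:ℝ) := by rw [hsum, inner_zero_left]
    rw [inner_add_left, inner_add_left] at hz
    linarith
  have hlt : ∀ a, ⟪p a, q⟫ < 1 := by
    intro a
    rcases lt_or_eq_of_le (real_inner_le_norm (p a) q) with h' | h'
    · rw [hqn, tri_norm h, one_mul] at h'; exact h'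
    · exfalso
      refine hno a ?_
      have := (inner_eq_one_iff_of_norm_eq_one (tri_norm h a) hqn).mp
        (by rw [h', hqn, tri_norm h, one_mul])
      exact this.symm
  have hqq : (1:ℝ) = ∑ a : Fin 3, ((1 + 2*⟪p a, q⟫)/3) * ⟪p a, q⟫ := by
    have h1 : ⟪q, q⟫ = (1:ℝ) := by rw [real_inner_self_eq_norm_sq, hqn]; norm_num
    calc (1:ℝ) = ⟪q,q⟫ := h1.symm
      _ = ⟪∑ a : Fin 3, ((1 + 2*⟪p a, q⟫)/3) • p a, q⟫ := by rw [← tri_bary h q]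
      _ = ∑ a : Fin 3, ((1 + 2*⟪p a, q⟫)/3) * ⟪p a, q⟫ := by
          rw [sum_inner]
          exact Finset.sum_congr rfl fun a _ => real_inner_smul_left _ _ _
  have hstrict : ∑ a : Fin 3, ((1 + 2*⟪p a, q⟫)/3) * ⟪p a, q⟫
      < ∑ a : Fin 3, (1 + 2*⟪p a, q⟫)/3 := by
    apply Finset.sum_lt_sum
    · intro a _
      nlinarith [hlt a, hnn a]
    · obtain ⟨a, -, ha⟩ := Finset.exists_ne_zero_of_sum_ne_zero
        (by rw [hs1]; norm_num : ∑ a : Fin 3, (1 + 2*⟪p a, q⟫)/3 ≠ 0)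
      refine ⟨a, Finset.mem_univ a, ?_⟩
      have hwa : 0 < (1 + 2*⟪p a, q⟫)/3 := lt_of_le_of_ne (hnn a) (Ne.symm ha)
      nlinarith [hlt a]
  rw [hs1, ← hqq] at hstrict
  exact lt_irrefl 1 hstrict

end Tri


section Main
variable {n : ℕ} {v : Fin n → Fin 3 → E2}

def Kset (v : Fin n → Fin 3 → E2) : Set E2 := {x | ∀ i a, -(1/2) ≤ ⟪v i a, x⟫}

lemma Kset_closed : IsClosed (Kset v) := by
  have : Kset v = ⋂ i, ⋂ a, {x : E2 | -(1/2) ≤ ⟪v i a, x⟫} := by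
    ext x; simp [Kset, Set.mem_iInter]
  rw [this]
  exact isClosed_iInter fun i => isClosed_iInter fun a =>
    isClosed_le continuous_const (Continuous.inner continuous_const continuous_id)

lemma perturb (hn : 2 ≤ n) {x : E2} (hx : x ∈ Kset v) (d : E2)
    (hd : ∀ i a, ⟪v i a, x⟫ = -(1/2) → ⟪v i a, d⟫ = 0) :
    ∃ ε : ℝ, 0 < ε ∧ ∀ s : ℝ, |s| ≤ ε → x + s • d ∈ Kset v := by
  classical
  haveI : Nonempty (Fin n) := ⟨⟨0, by omega⟩⟩
  set δ : Fin n × Fin 3 → ℝ := fun e =>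
    if ⟪v e.1 e.2, x⟫ = -(1/2) then 1
    else (⟪v e.1 e.2, x⟫ + 1/2) / (|⟪v e.1 e.2, d⟫| + 1) with hδ
  have hδpos : ∀ e, 0 < δ e := by
    intro e
    rw [hδ]
    dsimp only
    split_ifs with h
    · norm_num
    · apply div_pos
      · have := hx e.1 e.2
        rcases lt_or_eq_of_le this with h' | h'
        · linarith
        · exact absurd h'.symm h
      · positivity
  set ε : ℝ := Finset.univ.inf' Finset.univ_nonempty δ with hε
  refine ⟨ε, ?_, ?_⟩
  · rw [hε, Finset.lt_inf'_iff]
    exact fun e _ => hδpos e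
  · intro s hs i a
    have hεle : ε ≤ δ (i, a) := Finset.inf'_le _ (Finset.mem_univ _)
    rw [inner_add_right, real_inner_smul_right]
    by_cases h : ⟪v i a, x⟫ = -(1/2)
    · rw [h, hd i a h]; norm_num
    · have hgt : -(1/2) < ⟪v i a, x⟫ := by
        rcases lt_or_eq_of_le (hx i a) with h' | h'
        · exact h'
        · exact absurd h'.symm h
      have hδia : δ (i, a) = (⟪v i a, x⟫ + 1/2) / (|⟪v i a, d⟫| + 1) := by
        rw [hδ]; simp only; rw [if_neg h]
      have habs : |s * ⟪v i a, d⟫| < ⟪v i a, x⟫ + 1/2 := by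
        rw [abs_mul]
        calc |s| * |⟪v i a, d⟫| ≤ ε * |⟪v i a, d⟫| := by
              apply mul_le_mul_of_nonneg_right hs (abs_nonneg _)
          _ ≤ ((⟪v i a, x⟫ + 1/2) / (|⟪v i a, d⟫| + 1)) * |⟪v i a, d⟫| := by
              apply mul_le_mul_of_nonneg_right _ (abs_nonneg _)
              rw [← hδia]; exact hεle
          _ < ⟪v i a, x⟫ + 1/2 := by
              rw [div_mul_eq_mul_div, div_lt_iff₀ (by positivity)]
              nlinarith [abs_nonneg (⟪v i a, d⟫), hgt]
      have := neg_abs_le (s * ⟪v i a, d⟫)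
      linarith
  
lemma two_active_extreme (hv1 : ∀ i a, ‖v i a‖ = 1) {x : E2} (hx : x ∈ Kset v)
    (e₁ e₂ : Fin n × Fin 3) (hne : v e₁.1 e₁.2 ≠ v e₂.1 e₂.2)
    (h1 : ⟪v e₁.1 e₁.2, x⟫ = -(1/2)) (h2 : ⟪v e₂.1 e₂.2, x⟫ = -(1/2)) :
    x ∈ Set.extremePoints ℝ (Kset v) := by
  rw [mem_extremePoints]
  refine ⟨hx, fun x₁ hx₁ x₂ hx₂ hseg => ?_⟩
  obtain ⟨a, b, ha, hb, hab, heq⟩ := hseg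
  have key : ∀ e : Fin n × Fin 3, ⟪v e.1 e.2, x⟫ = -(1/2) → ⟪v e.1 e.2, x₁ - x₂⟫ = 0 := by
    intro e he
    have hcomb : a * ⟪v e.1 e.2, x₁⟫ + b * ⟪v e.1 e.2, x₂⟫ = -(1/2) := by
      rw [← he, ← heq, inner_add_right, real_inner_smul_right, real_inner_smul_right]
    have hb1 := hx₁ e.1 e.2
    have hb2 := hx₂ e.1 e.2
    have he1 : ⟪v e.1 e.2, x₁⟫ = -(1/2) := by nlinarith
    have he2 : ⟪v e.1 e.2, x₂⟫ = -(1/2) := by nlinarith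
    rw [inner_sub_right, he1, he2]; ring
  have hx12 : x₁ - x₂ = 0 :=
    perp_two_eq_zero (hv1 e₁.1 e₁.2) (hv1 e₂.1 e₂.2) hne h1 h2
      (key e₁ h1) (key e₂ h2)
  have hx12' : x₁ = x₂ := sub_eq_zero.mp hx12
  have hx1x : x₁ = x := by
    rw [← heq, hx12']
    rw [← add_smul, hab, one_smul]
  exact ⟨hx1x, hx12' ▸ hx1x⟩

lemma not_extreme (hn : 2 ≤ n) (hv1 : ∀ i a, ‖v i a‖ = 1) {x : E2} (hx : x ∈ Kset v)
    (hone : ∀ e₁ e₂ : Fin n × Fin 3, ⟪v e₁.1 e₁.2, x⟫ = -(1/2) →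
      ⟪v e₂.1 e₂.2, x⟫ = -(1/2) → e₁ = e₂) :
    x ∉ Set.extremePoints ℝ (Kset v) := by
  classical
  intro hext
  -- choose a direction orthogonal to the (at most one) active constraint
  obtain ⟨d, hd0, hd⟩ : ∃ d : E2, d ≠ 0 ∧ ∀ i a, ⟪v i a, x⟫ = -(1/2) → ⟪v i a, d⟫ = 0 := by
    by_cases hA : ∃ e : Fin n × Fin 3, ⟪v e.1 e.2, x⟫ = -(1/2)
    · obtain ⟨e₀, he₀⟩ := hA
      refine ⟨jay (v e₀.1 e₀.2), ?_, ?_⟩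
      · intro h
        have := jay_norm1 _ (hv1 e₀.1 e₀.2)
        rw [h, norm_zero] at this; norm_num at this
      · intro i a ha
        have : (i, a) = e₀ := hone (i, a) e₀ ha he₀
        have hva : v i a = v e₀.1 e₀.2 := by rw [← this]
        rw [hva]
        exact inner_jay _
    · push_neg at hA
      refine ⟨v ⟨0, by omega⟩ 0, ?_, fun i a ha => absurd ha (hA (i, a))⟩
      intro h
      have := hv1 ⟨0, by omega⟩ 0
      rw [h, norm_zero] at this; norm_num at this
  obtain ⟨ε, hε, hK⟩ := perturb hn hx d hd
  have h₁ : x + ε • d ∈ Kset v := hK ε (by rw [abs_of_pos hε])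
  have h₂ : x + (-ε) • d ∈ Kset v := hK (-ε) (by rw [abs_neg, abs_of_pos hε])
  have hseg : x ∈ openSegment ℝ (x + ε • d) (x + (-ε) • d) := by
    refine ⟨1/2, 1/2, by norm_num, by norm_num, by norm_num, ?_⟩
    module
  obtain ⟨hfix, -⟩ := (mem_extremePoints.mp hext).2 _ h₁ _ h₂ hseg
  have : ε • d = 0 := by
    have := hfix
    have h' : x + ε • d - x = 0 := by rw [hfix]; abel
    simpa using h'
  rcases smul_eq_zero.mp this with h' | h'
  · exact absurd h' (ne_of_gt hε)
  · exact hd0 h'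


lemma K_subset_hull (hins : ∀ i, InscribedEquilateral (v i)) (i : Fin n) :
    Kset v ⊆ convexHull ℝ (Set.range (v i)) := by
  intro x hx
  rw [tri_hull (hins i)]
  exact fun a => hx i a

lemma K_eq_iInter (hins : ∀ i, InscribedEquilateral (v i)) :
    (⋂ i, convexHull ℝ (Set.range (v i))) = Kset v := by
  ext x
  simp only [Set.mem_iInter]
  constructor
  · intro h i a
    have := h i
    rw [tri_hull (hins i)] at this
    exact this a
  · intro h i
    exact K_subset_hull hins i h

/-- injectivity of the family of all vertices -/
lemma vertex_inj (hins : ∀ i, InscribedEquilateral (v i))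
    (hdist : ∀ i j, i ≠ j → convexHull ℝ (Set.range (v i)) ≠ convexHull ℝ (Set.range (v j)))
    {i j : Fin n} {a b : Fin 3} (h : v i a = v j b) : i = j ∧ a = b := by
  by_cases hij : i = j
  · subst hij
    exact ⟨rfl, (hins i).1.injective h⟩
  · exfalso
    set P := v i a with hP
    have hPn : ‖P‖ = 1 := tri_norm (hins i) a
    set s₁ : E2 := (-(1/2) : ℝ) • P + (Real.sqrt 3/2) • jay P with hs₁
    set s₂ : E2 := (-(1/2) : ℝ) • P + (-(Real.sqrt 3/2)) • jay P with hs₂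
    have key : ∀ q : E2, ‖q‖ = 1 → ⟪P, q⟫ = -(1/2) → q = s₁ ∨ q = s₂ := by
      intro q hq hPq
      have hdec := decomp P q hPn
      have hpy : ⟪P,q⟫^2 + ⟪jay P, q⟫^2 = 1 := by
        rw [pyth P q hPn, hq]; norm_num
      rw [hPq] at hpy hdec
      have hβ : ⟪jay P, q⟫^2 = 3/4 := by nlinarith
      have h34 : (Real.sqrt 3/2)^2 = 3/4 := by
        rw [div_pow, Real.sq_sqrt (by norm_num : (3:ℝ) ≥ 0)]; norm_num
      have hfac : (⟪jay P, q⟫ - Real.sqrt 3/2) * (⟪jay P, q⟫ + Real.sqrt 3/2) = 0 := by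
        nlinarith [hβ, h34]
      rcases mul_eq_zero.mp hfac with h' | h'
      · left; rw [hs₁, ← show ⟪jay P, q⟫ = Real.sqrt 3/2 by linarith]; exact hdec
      · right; rw [hs₂, ← show ⟪jay P, q⟫ = -(Real.sqrt 3/2) by linarith]; exact hdec
    -- both ranges equal {P, s₁, s₂}
    have hrange : ∀ k : Fin n, ∀ c : Fin 3, v k c = P →
        Set.range (v k) = {P, s₁, s₂} := by
      intro k c hkc
      have hthird : ∀ c₀ : Fin 3, ∃ c' c'' : Fin 3, c' ≠ c'' ∧ c' ≠ c₀ ∧ c'' ≠ c₀ := by decide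
      obtain ⟨c', c'', hc'c'', hc'c, hc''c⟩ := hthird c
      have hmem' : v k c' = s₁ ∨ v k c' = s₂ := by
        apply key _ (tri_norm (hins k) c')
        rw [← hkc]
        exact (tri_inner (hins k)).1 c c' (Ne.symm hc'c)
      have hmem'' : v k c'' = s₁ ∨ v k c'' = s₂ := by
        apply key _ (tri_norm (hins k) c'')
        rw [← hkc]
        exact (tri_inner (hins k)).1 c c'' (Ne.symm hc''c)
      have hne : v k c' ≠ v k c'' := fun h => hc'c'' ((hins k).1.injective h)
      apply Set.Subset.antisymm
      · rintro - ⟨e, rfl⟩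
        rcases eq_or_ne e c with rfl | hec
        · rw [hkc]; exact Set.mem_insert _ _
        · have : v k e = s₁ ∨ v k e = s₂ := by
            apply key _ (tri_norm (hins k) e)
            rw [← hkc]
            exact (tri_inner (hins k)).1 c e (Ne.symm hec)
          rcases this with h' | h'
          · rw [h']; exact Set.mem_insert_of_mem _ (Set.mem_insert _ _)
          · rw [h']; exact Set.mem_insert_of_mem _ (Set.mem_insert_of_mem _ rfl)
      · intro z hz
        rcases hz with rfl | rfl | rfl
        · exact ⟨c, hkc⟩
        · rcases hmem' with h' | h'
          · exact ⟨c', h'⟩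
          · rcases hmem'' with h'' | h''
            · exact ⟨c'', h''⟩
            · exact absurd (h'.trans h''.symm) hne
        · rcases hmem'' with h'' | h''
          · rcases hmem' with h' | h'
            · exact absurd (h'.trans h''.symm) hne
            · exact ⟨c', h'⟩
          · exact ⟨c'', h''⟩
    have h1 := hrange i a rfl
    have h2 := hrange j b h.symm
    exact hdist i j hij (by rw [h1, h2])

/-- the frontier of a triangle, for points of K -/
lemma frontier_iff (hins : ∀ i, InscribedEquilateral (v i)) (i : Fin n) {x : E2}
    (hx : x ∈ Kset v) :
    x ∈ frontier (convexHull ℝ (Set.range (v i))) ↔ ∃ a, ⟪v i a, x⟫ = -(1/2) := by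
  have hTeq := tri_hull (hins i)
  have hTclosed : IsClosed (convexHull ℝ (Set.range (v i))) := by
    rw [hTeq]
    have : {x : E2 | ∀ a, -(1/2) ≤ ⟪v i a, x⟫} = ⋂ a, {x : E2 | -(1/2) ≤ ⟪v i a, x⟫} := by
      ext y; simp [Set.mem_iInter]
    rw [this]
    exact isClosed_iInter fun a =>
      isClosed_le continuous_const (Continuous.inner continuous_const continuous_id)
  rw [hTclosed.frontier_eq, Set.mem_diff]
  constructor
  · rintro ⟨-, hnotint⟩
    by_contra hno
    push_neg at hno
    have hstrict : ∀ a, -(1/2) < ⟪v i a, x⟫ := fun a => lt_of_le_of_ne (hx i a) (Ne.symm (hno a))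
    have hU : IsOpen {y : E2 | ∀ a, -(1/2) < ⟪v i a, y⟫} := by
      have : {y : E2 | ∀ a, -(1/2) < ⟪v i a, y⟫} = ⋂ a, {y : E2 | -(1/2) < ⟪v i a, y⟫} := by
        ext y; simp [Set.mem_iInter]
      rw [this]
      exact isOpen_iInter_of_finite fun a =>
        isOpen_lt continuous_const (Continuous.inner continuous_const continuous_id)
    have hsub : {y : E2 | ∀ a, -(1/2) < ⟪v i a, y⟫} ⊆ convexHull ℝ (Set.range (v i)) := by
      intro y hy; rw [hTeq]; exact fun a => le_of_lt (hy a)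
    exact hnotint (interior_maximal hsub hU hstrict)
  · rintro ⟨a, ha⟩
    refine ⟨by rw [hTeq]; exact fun b => hx i b, ?_⟩
    intro hint
    rw [mem_interior_iff_mem_nhds, Metric.mem_nhds_iff] at hint
    obtain ⟨ε, hε, hball⟩ := hint
    have hmem : x + (-(ε/2)) • v i a ∈ ball x ε := by
      rw [mem_ball, dist_eq_norm]
      have : x + (-(ε/2)) • v i a - x = (-(ε/2)) • v i a := by abel
      rw [this, norm_smul, tri_norm (hins i) a]
      simp [abs_of_pos hε]
      linarith
    have := hball hmem
    rw [hTeq] at this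
    have h2 := this a
    rw [inner_add_right, real_inner_smul_right, tri_self (hins i) a, ha] at h2
    linarith

/-- a point of K cannot have two active constraints from the same triangle -/
lemma same_tri (hn : 2 ≤ n) (hins : ∀ i, InscribedEquilateral (v i))
    (hinj : ∀ {i a j b}, v i a = v j b → i = j ∧ a = b)
    {x : E2} (hx : x ∈ Kset v) {i : Fin n} {a b : Fin 3} (hab : a ≠ b)
    (ha : ⟪v i a, x⟫ = -(1/2)) (hb : ⟪v i b, x⟫ = -(1/2)) : False := by
  have hpin := (tri_inner (hins i)).1
  have hthird : ∀ a₀ b₀ : Fin 3, a₀ ≠ b₀ → ∃ c : Fin 3, c ≠ a₀ ∧ c ≠ b₀ := by decide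
  obtain ⟨c, hca, hcb⟩ := hthird a b hab
  have hvab : v i a ≠ v i b := fun h => hab ((hins i).1.injective h)
  -- x = v i c
  have hr1 : ⟪v i a, x - v i c⟫ = 0 := by
    rw [inner_sub_right, ha, hpin a c (Ne.symm hca)]; ring
  have hr2 : ⟪v i b, x - v i c⟫ = 0 := by
    rw [inner_sub_right, hb, hpin b c (Ne.symm hcb)]; ring
  have hxc : x = v i c := by
    have := perp_two_eq_zero (tri_norm (hins i) a) (tri_norm (hins i) b) hvab ha hb hr1 hr2
    exact sub_eq_zero.mp this
  -- pick another triangle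
  haveI : Nontrivial (Fin n) := ⟨⟨⟨0, by omega⟩, ⟨1, by omega⟩, by simp [Fin.ext_iff]⟩⟩
  obtain ⟨j, hj⟩ := exists_ne i
  have hxj : x ∈ convexHull ℝ (Set.range (v j)) := K_subset_hull hins j hx
  have hxn : ‖x‖ = 1 := by rw [hxc]; exact tri_norm (hins i) c
  obtain ⟨b', hb'⟩ := tri_unit_mem (hins j) hxj hxn
  rw [hxc] at hb'
  exact hj (hinj hb').1.symm

/-- Each edge line contains exactly two extreme points. -/
lemma edge_two (hn : 2 ≤ n) (hins : ∀ i, InscribedEquilateral (v i))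
    (hv1 : ∀ i a, ‖v i a‖ = 1)
    (hinj : ∀ {i a j b}, v i a = v j b → i = j ∧ a = b) (i : Fin n) (c : Fin 3) :
    ∃ y₁ y₂ : E2, y₁ ≠ y₂ ∧
      ∀ x : E2, (x ∈ Set.extremePoints ℝ (Kset v) ∧ ⟪v i c, x⟫ = -(1/2)) ↔
        (x = y₁ ∨ x = y₂) := by
  classical
  set w : E2 := v i c with hw
  have hwn : ‖w‖ = 1 := hv1 i c
  set d : E2 := jay w with hdd
  have hdn : ‖d‖ = 1 := jay_norm1 w hwn
  set F : Set E2 := Kset v ∩ {x | ⟪w, x⟫ = -(1/2)} with hF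
  have hFclosed : IsClosed F :=
    Kset_closed.inter (isClosed_eq (Continuous.inner continuous_const continuous_id)
      continuous_const)
  have hFcpt : IsCompact F := by
    apply IsCompact.of_isClosed_subset ((Set.finite_range (v i)).isCompact_convexHull ℝ)
      hFclosed
    exact fun x hx => K_subset_hull hins i hx.1
  -- the tangent point m
  set m : E2 := (-(1/2) : ℝ) • w with hm
  have hmK : m ∈ Kset v := by
    intro j b
    rw [hm, real_inner_smul_right]
    have h1 : ⟪v j b, w⟫ ≤ 1 := by
      have := real_inner_le_norm (v j b) w
      rw [hv1 j b, hwn] at this; linarith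
    linarith
  have hmline : ⟪w, m⟫ = -(1/2) := by
    rw [hm, real_inner_smul_right, real_inner_self_eq_norm_sq, hwn]; norm_num
  have hmF : m ∈ F := ⟨hmK, hmline⟩
  have hmact : ∀ j b, ⟪v j b, m⟫ = -(1/2) → v j b = w := by
    intro j b hact
    rw [hm, real_inner_smul_right] at hact
    have h1 : ⟪v j b, w⟫ = 1 := by linarith
    exact (inner_eq_one_iff_of_norm_eq_one (hv1 j b) hwn).mp h1
  have hdw : ⟪w, d⟫ = 0 := inner_jay w
  -- line decomposition
  have hdm : ⟪d, m⟫ = 0 := by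
    rw [hm, real_inner_smul_right, real_inner_comm w d, hdw]; ring
  have hdd1 : ⟪d, d⟫ = (1:ℝ) := by rw [real_inner_self_eq_norm_sq, hdn]; norm_num
  have hdec : ∀ x : E2, ⟪w, x⟫ = -(1/2) → x = m + ⟪d, x⟫ • d := by
    intro x hx
    have hthis := decomp w x hwn
    rw [hx, ← hdd, ← hm] at hthis
    exact hthis
  -- nondegeneracy of F
  obtain ⟨ε, hε, hεK⟩ := perturb hn hmK d (by
    intro j b hact
    rw [hmact j b hact]
    exact hdw)
  have hmεF : ∀ s : ℝ, |s| ≤ ε → m + s • d ∈ F := by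
    intro s hs
    refine ⟨hεK s hs, ?_⟩
    simp only [Set.mem_setOf_eq]
    rw [inner_add_right, hmline, real_inner_smul_right, hdw]; ring
  -- min and max of f on F
  set f : E2 → ℝ := fun x => ⟪d, x⟫ with hf
  have hfc : ContinuousOn f F := (Continuous.inner continuous_const continuous_id).continuousOn
  obtain ⟨y₁, hy₁F, hy₁min⟩ := hFcpt.exists_isMinOn ⟨m, hmF⟩ hfc
  obtain ⟨y₂, hy₂F, hy₂max⟩ := hFcpt.exists_isMaxOn ⟨m, hmF⟩ hfc
  have hfm : ∀ s : ℝ, f (m + s • d) = s := by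
    intro s
    show ⟪d, m + s • d⟫ = s
    rw [inner_add_right, hdm, real_inner_smul_right, hdd1]; ring
  have hfy₁ : f y₁ ≤ -ε := by
    have h2 : f y₁ ≤ f (m + (-ε) • d) := hy₁min (hmεF (-ε) (by rw [abs_neg, abs_of_pos hε]))
    rwa [hfm] at h2
  have hfy₂ : ε ≤ f y₂ := by
    have h2 : f (m + ε • d) ≤ f y₂ := hy₂max (hmεF ε (by rw [abs_of_pos hε]))
    rwa [hfm] at h2
  have hneq : y₁ ≠ y₂ := by
    intro h
    rw [h] at hfy₁
    linarith
  have hy₁line : ⟪w, y₁⟫ = -(1/2) := hy₁F.2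
  have hy₂line : ⟪w, y₂⟫ = -(1/2) := hy₂F.2
  have hy₁dec : y₁ = m + f y₁ • d := hdec y₁ hy₁line
  have hy₂dec : y₂ = m + f y₂ • d := hdec y₂ hy₂line
  -- the endpoints have a second active constraint, hence are extreme
  have hsecond : ∀ y : E2, y ∈ F →
      (∀ z ∈ F, f y ≤ f z) ∨ (∀ z ∈ F, f z ≤ f y) →
      ∃ e : Fin n × Fin 3, v e.1 e.2 ≠ w ∧ ⟪v e.1 e.2, y⟫ = -(1/2) := by
    intro y hyF hopt
    by_contra hno
    push_neg at hno
    obtain ⟨ε', hε', hε'K⟩ := perturb hn hyF.1 d (by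
      intro j b hact
      by_cases hvw : v j b = w
      · rw [hvw]; exact hdw
      · exact absurd hact (hno (j, b) hvw))
    have hyd : ∀ s : ℝ, |s| ≤ ε' → m + (f y + s) • d ∈ F := by
      intro s hs
      have h1 : y + s • d ∈ Kset v := hε'K s hs
      have h2 : ⟪w, y + s • d⟫ = -(1/2) := by
        rw [inner_add_right, real_inner_smul_right, hdw, hyF.2]; ring
      have h3 : y + s • d = m + (f y + s) • d := by
        nth_rewrite 1 [hdec y hyF.2]
        rw [add_smul]; abel
      rw [← h3]; exact ⟨h1, h2⟩
    rcases hopt with hmin | hmax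
    · have h2 : f y ≤ f (m + (f y + -ε') • d) :=
        hmin _ (hyd (-ε') (by rw [abs_neg, abs_of_pos hε']))
      rw [hfm] at h2; linarith
    · have h2 : f (m + (f y + ε') • d) ≤ f y :=
        hmax _ (hyd ε' (by rw [abs_of_pos hε']))
      rw [hfm] at h2; linarith
  have hy₁ext : y₁ ∈ Set.extremePoints ℝ (Kset v) := by
    obtain ⟨e, hne, hact⟩ := hsecond y₁ hy₁F (Or.inl fun z hz => hy₁min hz)
    exact two_active_extreme hv1 hy₁F.1 (i, c) e
      (by show v i c ≠ v e.1 e.2; rw [← hw]; exact fun h => hne h.symm)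
      (by show ⟪v i c, y₁⟫ = -(1/2); rw [← hw]; exact hy₁line) hact
  have hy₂ext : y₂ ∈ Set.extremePoints ℝ (Kset v) := by
    obtain ⟨e, hne, hact⟩ := hsecond y₂ hy₂F (Or.inr fun z hz => hy₂max hz)
    exact two_active_extreme hv1 hy₂F.1 (i, c) e
      (by show v i c ≠ v e.1 e.2; rw [← hw]; exact fun h => hne h.symm)
      (by show ⟪v i c, y₂⟫ = -(1/2); rw [← hw]; exact hy₂line) hact
  refine ⟨y₁, y₂, hneq, fun x => ⟨?_, ?_⟩⟩
  · rintro ⟨hxext, hxline⟩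
    have hxK : x ∈ Kset v := extremePoints_subset hxext
    have hxF : x ∈ F := ⟨hxK, hxline⟩
    have hxdec : x = m + f x • d := hdec x hxline
    by_contra hc
    push_neg at hc
    obtain ⟨hne₁, hne₂⟩ := hc
    have hlt₁ : f y₁ < f x := by
      rcases lt_or_eq_of_le (show f y₁ ≤ f x from hy₁min hxF) with h' | h'
      · exact h'
      · exfalso; apply hne₁
        rw [hxdec, hy₁dec, ← h']
    have hlt₂ : f x < f y₂ := by
      rcases lt_or_eq_of_le (show f x ≤ f y₂ from hy₂max hxF) with h' | h'
      · exact h'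
      · exfalso; apply hne₂
        rw [hxdec, hy₂dec, h']
    -- x is in the open segment (y₁, y₂)
    set A : ℝ := (f y₂ - f x)/(f y₂ - f y₁) with hA
    set B : ℝ := (f x - f y₁)/(f y₂ - f y₁) with hB
    have hd21 : 0 < f y₂ - f y₁ := by linarith
    have hA0 : 0 < A := by apply div_pos <;> linarith
    have hB0 : 0 < B := by apply div_pos <;> linarith
    have hAB : A + B = 1 := by rw [hA, hB]; field_simp; ring
    have hcoef : A * f y₁ + B * f y₂ = f x := by
      rw [hA, hB]; field_simp; ring
    have hseg : x ∈ openSegment ℝ y₁ y₂ := by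
      refine ⟨A, B, hA0, hB0, hAB, ?_⟩
      have hgoal : A • (m + f y₁ • d) + B • (m + f y₂ • d)
          = (A + B) • m + (A * f y₁ + B * f y₂) • d := by module
      rw [hy₁dec, hy₂dec, hxdec, ← hcoef, hgoal, hAB, one_smul]
    obtain ⟨h1, -⟩ := (mem_extremePoints.mp hxext).2 y₁ hy₁F.1 y₂ hy₂F.1 hseg
    exact hne₁ h1.symm
  · rintro (rfl | rfl)
    · exact ⟨hy₁ext, hy₁line⟩
    · exact ⟨hy₂ext, hy₂line⟩


end Main

lemma fin3_sum {M : Type*} [AddCommMonoid M] {a b c : Fin 3} (hab : a ≠ b) (hac : a ≠ c)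
    (hbc : b ≠ c) (g : Fin 3 → M) : ∑ e, g e = g a + g b + g c := by
  have huniv : (Finset.univ : Finset (Fin 3)) = {a, b, c} := by
    have hall : ∀ a b c e : Fin 3, a ≠ b → a ≠ c → b ≠ c → (e = a ∨ e = b ∨ e = c) := by decide
    apply Finset.ext
    intro e
    simp only [Finset.mem_univ, true_iff, Finset.mem_insert, Finset.mem_singleton]
    exact hall a b c e hab hac hbc
  rw [huniv, Finset.sum_insert (by simp [hab, hac]), Finset.sum_insert (by simp [hbc]),
    Finset.sum_singleton, add_assoc]

/-- with T₁, …, Tₙ (n ≥ 2) distinct inscribed equilateral triangles and S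
the vertex set of ∩ᵢ Tᵢ: every edge of every Tᵢ contains exactly 2 points of S, every
point of S lies on the boundary of exactly two of the triangles, and |S| = 3n. -/
theorem stmt_14 {n : ℕ} (hn : 2 ≤ n) (v : Fin n → Fin 3 → EuclideanSpace ℝ (Fin 2))
    (hins : ∀ i, InscribedEquilateral (v i))
    (hdist : ∀ i j, i ≠ j →
      convexHull ℝ (Set.range (v i)) ≠ convexHull ℝ (Set.range (v j)))
    (S : Set (EuclideanSpace ℝ (Fin 2)))
    (hS : S = Set.extremePoints ℝ (⋂ i, convexHull ℝ (Set.range (v i)))) :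
    (∀ i, ∀ a b : Fin 3, a ≠ b → (S ∩ segment ℝ (v i a) (v i b)).ncard = 2) ∧
    (∀ x ∈ S, {i : Fin n | x ∈ frontier (convexHull ℝ (Set.range (v i)))}.ncard = 2) ∧
    S.ncard = 3 * n := by
  classical
  have hv1 : ∀ i a, ‖v i a‖ = 1 := fun i a => tri_norm (hins i) a
  have hpin : ∀ i, ∀ a b, a ≠ b → ⟪v i a, v i b⟫ = -(1/2) := fun i => (tri_inner (hins i)).1
  have hinj : ∀ {i a j b}, v i a = v j b → i = j ∧ a = b := fun h => vertex_inj hins hdist h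
  rw [K_eq_iInter hins] at hS
  choose y₁ y₂ hyne hyiff using fun (e : Fin n × Fin 3) => edge_two hn hins hv1 hinj e.1 e.2
  have hSK : ∀ x ∈ S, x ∈ Kset v := fun x hx => extremePoints_subset (hS ▸ hx)
  -- each point of S has exactly two active constraints, belonging to distinct triangles
  have hact2 : ∀ x ∈ S, ∃ e₁ e₂ : Fin n × Fin 3, e₁.1 ≠ e₂.1 ∧
      ⟪v e₁.1 e₁.2, x⟫ = -(1/2) ∧ ⟪v e₂.1 e₂.2, x⟫ = -(1/2) ∧
      (∀ e : Fin n × Fin 3, ⟪v e.1 e.2, x⟫ = -(1/2) → e = e₁ ∨ e = e₂) := by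
    intro x hx
    have hxK : x ∈ Kset v := hSK x hx
    have hxext : x ∈ Set.extremePoints ℝ (Kset v) := hS ▸ hx
    by_cases hone : ∀ e₁ e₂ : Fin n × Fin 3, ⟪v e₁.1 e₁.2, x⟫ = -(1/2) →
        ⟪v e₂.1 e₂.2, x⟫ = -(1/2) → e₁ = e₂
    · exact absurd hxext (not_extreme hn hv1 hxK hone)
    · push_neg at hone
      obtain ⟨e₁, e₂, h1, h2, hne⟩ := hone
      have hvne : v e₁.1 e₁.2 ≠ v e₂.1 e₂.2 := by
        intro h
        exact hne (Prod.ext (hinj h).1 (hinj h).2)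
      have hfst : e₁.1 ≠ e₂.1 := by
        intro h
        have hsnd : e₁.2 ≠ e₂.2 := by
          intro h2'
          exact hne (Prod.ext h h2')
        exact same_tri hn hins (fun h => hinj h) hxK hsnd
          (by rw [← h] at h2; exact h1) (by rw [h]; exact h2)
      refine ⟨e₁, e₂, hfst, h1, h2, ?_⟩
      intro e he
      rcases atmost_two (hv1 e₁.1 e₁.2) (hv1 e₂.1 e₂.2) (hv1 e.1 e.2) hvne h1 h2 he with h' | h'
      · left; exact Prod.ext (hinj h').1 (hinj h').2
      · right; exact Prod.ext (hinj h').1 (hinj h').2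
  -- S is finite
  have hSfin : S.Finite := by
    apply Set.Finite.subset
      (Set.finite_iUnion fun e : Fin n × Fin 3 =>
        (Set.finite_singleton (y₂ e)).insert (y₁ e))
    intro x hx
    obtain ⟨e₁, e₂, -, h1, -, -⟩ := hact2 x hx
    have := (hyiff e₁ x).mp ⟨hS ▸ hx, h1⟩
    exact Set.mem_iUnion.mpr ⟨e₁, by rcases this with h | h <;> simp [h]⟩
  ----------------------------------------------------------------
  -- Part 1
  have part1 : ∀ i, ∀ a b : Fin 3, a ≠ b → (S ∩ segment ℝ (v i a) (v i b)).ncard = 2 := by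
    intro i a b hab
    have hthird : ∀ a₀ b₀ : Fin 3, a₀ ≠ b₀ → ∃ c : Fin 3, c ≠ a₀ ∧ c ≠ b₀ := by decide
    obtain ⟨c, hca, hcb⟩ := hthird a b hab
    have hseg_eq : S ∩ segment ℝ (v i a) (v i b) = {y₁ (i,c), y₂ (i,c)} := by
      apply Set.Subset.antisymm
      · rintro x ⟨hxS, hxseg⟩
        obtain ⟨t₁, t₂, ht₁, ht₂, hts, rfl⟩ := hxseg
        have hline : ⟪v i c, t₁ • v i a + t₂ • v i b⟫ = -(1/2) := by
          rw [inner_add_right, real_inner_smul_right, real_inner_smul_right,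
            hpin i c a hca, hpin i c b hcb]
          nlinarith
        have := (hyiff (i,c) _).mp ⟨hS ▸ hxS, hline⟩
        rcases this with h | h
        · rw [h]; exact Set.mem_insert _ _
        · rw [h]; exact Set.mem_insert_of_mem _ rfl
      · intro x hx
        have hxor : x = y₁ (i,c) ∨ x = y₂ (i,c) := by
          rcases hx with rfl | rfl
          · exact Or.inl rfl
          · exact Or.inr (by rfl)
        obtain ⟨hxext, hxline⟩ := (hyiff (i,c) x).mpr hxor
        have hxK : x ∈ Kset v := extremePoints_subset hxext
        refine ⟨hS ▸ hxext, ?_⟩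
        -- barycentric: the coefficient at c vanishes
        have hb := tri_bary (hins i) x
        have hcc : (1 + 2*⟪v i c, x⟫)/3 = 0 := by rw [hxline]; ring
        have hsum3 : ∑ e : Fin 3, (1 + 2*⟪v i e, x⟫)/3 = 1 := by
          rw [Fin.sum_univ_three]
          have hz : ⟪v i 0 + v i 1 + v i 2, x⟫ = (0:ℝ) := by
            rw [(tri_inner (hins i)).2, inner_zero_left]
          rw [inner_add_left, inner_add_left] at hz
          linarith
        rw [fin3_sum hab (Ne.symm hca) (Ne.symm hcb)
          (fun e => (1 + 2*⟪v i e, x⟫)/3)] at hsum3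
        rw [fin3_sum hab (Ne.symm hca) (Ne.symm hcb)
          (fun e => ((1 + 2*⟪v i e, x⟫)/3) • v i e), hcc, zero_smul, add_zero] at hb
        refine ⟨(1 + 2*⟪v i a, x⟫)/3, (1 + 2*⟪v i b, x⟫)/3, ?_, ?_, ?_, hb.symm⟩
        · have := hxK i a; linarith
        · have := hxK i b; linarith
        · rw [hcc] at hsum3; linarith
    rw [hseg_eq]
    exact Set.ncard_pair (hyne (i,c))
  ----------------------------------------------------------------
  -- Part 2
  have part2 : ∀ x ∈ S,
      {i : Fin n | x ∈ frontier (convexHull ℝ (Set.range (v i)))}.ncard = 2 := by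
    intro x hx
    obtain ⟨e₁, e₂, hfst, h1, h2, huniq⟩ := hact2 x hx
    have hset : {i : Fin n | x ∈ frontier (convexHull ℝ (Set.range (v i)))}
        = {e₁.1, e₂.1} := by
      ext j
      rw [Set.mem_setOf_eq, frontier_iff hins j (hSK x hx)]
      simp only [Set.mem_insert_iff, Set.mem_singleton_iff]
      constructor
      · rintro ⟨a, ha⟩
        rcases huniq (j, a) ha with h' | h'
        · exact Or.inl (congrArg Prod.fst h')
        · exact Or.inr (congrArg Prod.fst h')
      · rintro (h | h)
        · exact ⟨e₁.2, by rw [h]; exact h1⟩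
        · exact ⟨e₂.2, by rw [h]; exact h2⟩
    rw [hset]
    exact Set.ncard_pair hfst
  ----------------------------------------------------------------
  -- Part 3 : double counting
  have part3 : S.ncard = 3 * n := by
    set Sf : Finset E2 := hSfin.toFinset with hSf
    have hmemS : ∀ x, x ∈ Sf ↔ x ∈ S := fun x => hSfin.mem_toFinset
    have hedge : ∀ e : Fin n × Fin 3,
        (Sf.filter fun x => ⟪v e.1 e.2, x⟫ = -(1/2)).card = 2 := by
      intro e
      have : (Sf.filter fun x => ⟪v e.1 e.2, x⟫ = -(1/2)) = {y₁ e, y₂ e} := by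
        apply Finset.ext
        intro x
        rw [Finset.mem_filter, Finset.mem_insert, Finset.mem_singleton, hmemS]
        constructor
        · rintro ⟨hxS, hline⟩
          exact (hyiff e x).mp ⟨hS ▸ hxS, hline⟩
        · intro h
          obtain ⟨hxext, hline⟩ := (hyiff e x).mpr h
          exact ⟨hS ▸ hxext, hline⟩
      rw [this]
      exact Finset.card_pair (hyne e)
    have hpoint : ∀ x ∈ Sf,
        ((Finset.univ : Finset (Fin n × Fin 3)).filter
          fun e => ⟪v e.1 e.2, x⟫ = -(1/2)).card = 2 := by
      intro x hxf
      have hx : x ∈ S := (hmemS x).mp hxf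
      obtain ⟨e₁, e₂, hfst, h1, h2, huniq⟩ := hact2 x hx
      have hne12 : e₁ ≠ e₂ := fun h => hfst (congrArg Prod.fst h)
      have : ((Finset.univ : Finset (Fin n × Fin 3)).filter
          fun e => ⟪v e.1 e.2, x⟫ = -(1/2)) = {e₁, e₂} := by
        apply Finset.ext
        intro e
        rw [Finset.mem_filter, Finset.mem_insert, Finset.mem_singleton]
        constructor
        · rintro ⟨-, he⟩
          exact huniq e he
        · rintro (rfl | rfl)
          · exact ⟨Finset.mem_univ _, h1⟩
          · exact ⟨Finset.mem_univ _, h2⟩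
      rw [this]
      exact Finset.card_pair hne12
    -- double count
    have hdouble : ∑ e : Fin n × Fin 3, (Sf.filter fun x => ⟪v e.1 e.2, x⟫ = -(1/2)).card
        = ∑ x ∈ Sf, ((Finset.univ : Finset (Fin n × Fin 3)).filter
            fun e => ⟪v e.1 e.2, x⟫ = -(1/2)).card := by
      simp only [Finset.card_filter]
      exact Finset.sum_comm
    have hL : ∑ e : Fin n × Fin 3, (Sf.filter fun x => ⟪v e.1 e.2, x⟫ = -(1/2)).card
        = 3 * n * 2 := by
      rw [Finset.sum_congr rfl fun e _ => hedge e]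
      simp [Finset.card_univ, mul_comm]
    have hR : ∑ x ∈ Sf, ((Finset.univ : Finset (Fin n × Fin 3)).filter
        fun e => ⟪v e.1 e.2, x⟫ = -(1/2)).card = Sf.card * 2 := by
      rw [Finset.sum_congr rfl hpoint]
      simp [mul_comm]
    have hcard : Sf.card = 3 * n := by
      have := hL.symm.trans (hdouble.trans hR)
      omega
    rw [Set.ncard_eq_toFinset_card _ hSfin]
    exact hcard
  exact ⟨part1, part2, part3⟩
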